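/- Let θ ∈ (0, 1/2] and let u ∈ S_{T[θ,S₁]} be such that min( ‖u + y‖ , ‖u − y‖ ) ≤ 1 for all y ∈ S_{T[θ,S₁]}. Then u = ε e_i for some ε ∈ {−1, 1} and some 1 ≤ i ≤ ⌊θ⁻¹⌋. -/

import Mathlib

open scoped BigOperators

noncomputable section

/-- Projection of a finitely supported vector onto the coordinates in `E`. -/
def tsProj (E : Finset ℕ+) (x : ℕ+ →₀ ℝ) : ℕ+ →₀ ℝ :=
  x.filter fun i => i ∈ E

/-- The Schreier families `S_n` on the positive integers:
`S₁` consists of the sets `F` with `|F| ≤ min F` (together with `∅`), and `S_{n+1}`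
consists of unions `F₁ ∪ ⋯ ∪ F_d` of nonempty members `F₁ < ⋯ < F_d` of `S_n`
with `d ≤ min F₁` (together with `∅`). -/
def Schreier : ℕ → Set (Finset ℕ+)
  | 0 => {F | F.card ≤ 1}
  | 1 => {F | ∀ a ∈ F, F.card ≤ (a : ℕ)}
  | n + 2 =>
      {F | F = ∅ ∨
        ∃ (d : ℕ) (G : Fin d → Finset ℕ+),
          0 < d ∧ (∀ i, G i ∈ Schreier (n + 1)) ∧ (∀ i, (G i).Nonempty) ∧
          (∀ i j : Fin d, i < j → ∀ a ∈ G i, ∀ b ∈ G j, a < b) ∧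
          (∀ i, ∀ a ∈ G i, d ≤ (a : ℕ)) ∧ F = Finset.univ.biUnion G}

/-- A tuple of nonempty finite sets `E 0 < E 1 < ⋯` whose set of minima belongs to `S`. -/
def TsAdmissible (S : Set (Finset ℕ+)) {d : ℕ} (E : Fin d → Finset ℕ+) : Prop :=
  (∀ i, (E i).Nonempty) ∧
  (∀ i j : Fin d, i < j → ∀ a ∈ E i, ∀ b ∈ E j, a < b) ∧
  ∃ μ : Fin d → ℕ+, (∀ i, IsLeast (↑(E i) : Set ℕ+) (μ i)) ∧
    Finset.univ.image μ ∈ S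

/-- The iterated norms `‖·‖_m` in the construction of the Tsirelson norm:
`‖x‖₀` is the supremum norm and
`‖x‖_{m+1} = max(‖x‖_m, sup{θ ∑ᵢ ‖Eᵢ x‖_m : E₁ < ⋯ < E_d, {min Eᵢ} ∈ S})`. -/
def tnormAux (θ : ℝ) (S : Set (Finset ℕ+)) : ℕ → (ℕ+ →₀ ℝ) → ℝ
  | 0, x => ⨆ i, |x i|
  | m + 1, x =>
      max (tnormAux θ S m x)
        (sSup {r : ℝ | ∃ (d : ℕ) (E : Fin d → Finset ℕ+), TsAdmissible S E ∧
          r = θ * ∑ i, tnormAux θ S m (tsProj (E i) x)})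

/-- The Tsirelson norm `‖x‖_{θ,S} = sup_m ‖x‖_m` on `c₀₀`. -/
def tnorm (θ : ℝ) (S : Set (Finset ℕ+)) (x : ℕ+ →₀ ℝ) : ℝ :=
  ⨆ m : ℕ, tnormAux θ S m x

/-- `X`, together with the sequence `e` of unit vectors, is (a realization of) the
Tsirelson space `T[θ, S_n]`: a Banach space containing `c₀₀` isometrically
(w.r.t. the Tsirelson norm) as a dense subspace, in which `(e i)` is a
(1-unconditional) basis, i.e. every `x` has a unique expansion `x = ∑ᵢ aᵢ eᵢ`. -/
structure IsTsirelsonSpace (θ : ℝ) (n : ℕ) (X : Type*) [NormedAddCommGroup X]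
    [NormedSpace ℝ X] (e : ℕ+ → X) : Prop where
  complete : CompleteSpace X
  norm_embed : ∀ a : ℕ+ →₀ ℝ, ‖a.sum fun i c => c • e i‖ = tnorm θ (Schreier n) a
  dense_embed : DenseRange fun a : ℕ+ →₀ ℝ => a.sum fun i c => c • e i
  expansion : ∀ x : X, ∃! a : ℕ+ → ℝ, HasSum (fun i => a i • e i) x


namespace TsAux

variable (θ : ℝ) (S : Set (Finset ℕ+))

def L1 (x : ℕ+ →₀ ℝ) : ℝ := ∑ k ∈ x.support, |x k|

lemma L1_nonneg (x : ℕ+ →₀ ℝ) : 0 ≤ L1 x :=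
  Finset.sum_nonneg fun _ _ => abs_nonneg _

lemma abs_le_L1 (x : ℕ+ →₀ ℝ) (i : ℕ+) : |x i| ≤ L1 x := by
  by_cases h : i ∈ x.support
  · exact Finset.single_le_sum (f := fun k => |x k|) (fun _ _ => abs_nonneg _) h
  · rw [Finsupp.notMem_support_iff.mp h]
    simpa using L1_nonneg x

lemma tsProj_apply (E : Finset ℕ+) (x : ℕ+ →₀ ℝ) (i : ℕ+) :
    tsProj E x i = if i ∈ E then x i else 0 := by
  classical
  simp [tsProj, Finsupp.filter_apply]

lemma L1_tsProj (E : Finset ℕ+) (x : ℕ+ →₀ ℝ) :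
    L1 (tsProj E x) = ∑ k ∈ x.support.filter (fun k => k ∈ E), |x k| := by
  classical
  rw [L1]
  have hs : (tsProj E x).support = x.support.filter (fun k => k ∈ E) := by
    simp [tsProj, Finsupp.support_filter]
  rw [hs]
  refine Finset.sum_congr rfl fun k hk => ?_
  rw [Finset.mem_filter] at hk
  rw [tsProj_apply, if_pos hk.2]

lemma sum_L1_tsProj_le (x : ℕ+ →₀ ℝ) {d : ℕ} (E : Fin d → Finset ℕ+)
    (hE : ∀ i j : Fin d, i < j → ∀ a ∈ E i, ∀ b ∈ E j, a < b) :
    ∑ i, L1 (tsProj (E i) x) ≤ L1 x := by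
  classical
  have hdisj : (↑(Finset.univ : Finset (Fin d)) : Set (Fin d)).PairwiseDisjoint
      (fun i => x.support.filter (fun k => k ∈ E i)) := by
    intro i _ j _ hij
    refine Finset.disjoint_left.mpr fun a hai haj => ?_
    rw [Finset.mem_filter] at hai haj
    rcases lt_or_gt_of_ne hij with hlt | hlt
    · exact absurd (hE i j hlt a hai.2 a haj.2) (lt_irrefl a)
    · exact absurd (hE j i hlt a haj.2 a hai.2) (lt_irrefl a)
  calc ∑ i, L1 (tsProj (E i) x)
      = ∑ i, ∑ k ∈ x.support.filter (fun k => k ∈ E i), |x k| := by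
        refine Finset.sum_congr rfl fun i _ => L1_tsProj _ _
    _ = ∑ k ∈ Finset.univ.biUnion (fun i => x.support.filter (fun k => k ∈ E i)), |x k| :=
        (Finset.sum_biUnion hdisj).symm
    _ ≤ L1 x := by
        refine Finset.sum_le_sum_of_subset_of_nonneg ?_ (fun _ _ _ => abs_nonneg _)
        intro k hk
        rw [Finset.mem_biUnion] at hk
        obtain ⟨i, _, hk⟩ := hk
        exact (Finset.mem_filter.mp hk).1

lemma tnormAux_zero (x : ℕ+ →₀ ℝ) : tnormAux θ S 0 x = ⨆ i, |x i| := rfl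

lemma tnormAux_succ (m : ℕ) (x : ℕ+ →₀ ℝ) : tnormAux θ S (m+1) x =
    max (tnormAux θ S m x)
      (sSup {r : ℝ | ∃ (d : ℕ) (E : Fin d → Finset ℕ+), TsAdmissible S E ∧
        r = θ * ∑ i, tnormAux θ S m (tsProj (E i) x)}) := rfl

lemma tnormAux_le_L1 (hθ0 : 0 ≤ θ) (hθ1 : θ ≤ 1) (m : ℕ) :
    ∀ (x : ℕ+ →₀ ℝ), tnormAux θ S m x ≤ L1 x := by
  induction m with
  | zero => exact fun x => ciSup_le fun i => abs_le_L1 x i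
  | succ m ih =>
    intro x
    rw [tnormAux_succ]
    refine max_le (ih x) (Real.sSup_le ?_ (L1_nonneg x))
    rintro r ⟨d, E, hadm, rfl⟩
    calc θ * ∑ i, tnormAux θ S m (tsProj (E i) x)
        ≤ θ * ∑ i, L1 (tsProj (E i) x) := by
          refine mul_le_mul_of_nonneg_left
            (Finset.sum_le_sum fun i _ => ih (tsProj (E i) x)) hθ0
      _ ≤ θ * L1 x :=
          mul_le_mul_of_nonneg_left (sum_L1_tsProj_le x E hadm.2.1) hθ0
      _ ≤ 1 * L1 x := mul_le_mul_of_nonneg_right hθ1 (L1_nonneg x)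
      _ = L1 x := one_mul _

lemma tn_set_le (hθ0 : 0 ≤ θ) (hθ1 : θ ≤ 1) (m : ℕ) (x : ℕ+ →₀ ℝ) :
    ∀ r ∈ {r : ℝ | ∃ (d : ℕ) (E : Fin d → Finset ℕ+), TsAdmissible S E ∧
        r = θ * ∑ i, tnormAux θ S m (tsProj (E i) x)}, r ≤ θ * L1 x := by
  rintro r ⟨d, E, hadm, rfl⟩
  refine mul_le_mul_of_nonneg_left ?_ hθ0
  calc ∑ i, tnormAux θ S m (tsProj (E i) x)
      ≤ ∑ i, L1 (tsProj (E i) x) :=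
        Finset.sum_le_sum fun i _ => tnormAux_le_L1 θ S hθ0 hθ1 m _
    _ ≤ L1 x := sum_L1_tsProj_le x E hadm.2.1

lemma tnormAux_le_max (hθ0 : 0 ≤ θ) (hθ1 : θ ≤ 1) (m : ℕ) (x : ℕ+ →₀ ℝ) :
    tnormAux θ S m x ≤ max (tnormAux θ S 0 x) (θ * L1 x) := by
  induction m with
  | zero => exact le_max_left _ _
  | succ m ih =>
    rw [tnormAux_succ]
    refine max_le ih (le_trans (Real.sSup_le (tn_set_le θ S hθ0 hθ1 m x)
      (mul_nonneg hθ0 (L1_nonneg x))) (le_max_right _ _))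

lemma tnorm_le_max (hθ0 : 0 ≤ θ) (hθ1 : θ ≤ 1) (x : ℕ+ →₀ ℝ) :
    tnorm θ S x ≤ max (tnormAux θ S 0 x) (θ * L1 x) :=
  ciSup_le (tnormAux_le_max θ S hθ0 hθ1 · x)

lemma tnormAux_le_tnorm (hθ0 : 0 ≤ θ) (hθ1 : θ ≤ 1) (m : ℕ) (x : ℕ+ →₀ ℝ) :
    tnormAux θ S m x ≤ tnorm θ S x := by
  refine le_ciSup (f := fun m => tnormAux θ S m x) ⟨max (tnormAux θ S 0 x) (θ * L1 x), ?_⟩ m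
  rintro _ ⟨m', rfl⟩
  exact tnormAux_le_max θ S hθ0 hθ1 m' x

lemma abs_le_tnormAux0 (x : ℕ+ →₀ ℝ) (i : ℕ+) : |x i| ≤ tnormAux θ S 0 x := by
  rw [tnormAux_zero]
  refine le_ciSup (f := fun i => |x i|) ⟨L1 x, ?_⟩ i
  rintro _ ⟨j, rfl⟩
  exact abs_le_L1 x j

lemma abs_le_tnorm (hθ0 : 0 ≤ θ) (hθ1 : θ ≤ 1) (x : ℕ+ →₀ ℝ) (i : ℕ+) :
    |x i| ≤ tnorm θ S x :=
  (abs_le_tnormAux0 θ S x i).trans (tnormAux_le_tnorm θ S hθ0 hθ1 0 x)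

lemma tnorm_lower (hθ0 : 0 ≤ θ) (hθ1 : θ ≤ 1) (x : ℕ+ →₀ ℝ) {d : ℕ}
    (E : Fin d → Finset ℕ+) (hadm : TsAdmissible S E) :
    θ * ∑ i, tnormAux θ S 0 (tsProj (E i) x) ≤ tnorm θ S x := by
  have hmem : (θ * ∑ i, tnormAux θ S 0 (tsProj (E i) x)) ∈
      {r : ℝ | ∃ (d : ℕ) (E : Fin d → Finset ℕ+), TsAdmissible S E ∧
        r = θ * ∑ i, tnormAux θ S 0 (tsProj (E i) x)} := ⟨d, E, hadm, rfl⟩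
  have h1 : θ * ∑ i, tnormAux θ S 0 (tsProj (E i) x) ≤ tnormAux θ S 1 x := by
    rw [tnormAux_succ]
    exact le_max_of_le_right (le_csSup ⟨θ * L1 x, tn_set_le θ S hθ0 hθ1 0 x⟩ hmem)
  exact h1.trans (tnormAux_le_tnorm θ S hθ0 hθ1 1 x)

lemma tnormAux0_proj_singleton (x : ℕ+ →₀ ℝ) (p : ℕ+) :
    tnormAux θ S 0 (tsProj {p} x) = |x p| := by
  classical
  rw [tnormAux_zero]
  apply le_antisymm
  · refine ciSup_le fun i => ?_
    rw [tsProj_apply]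
    by_cases hi : i ∈ ({p} : Finset ℕ+)
    · rw [if_pos hi, Finset.mem_singleton.mp hi]
    · rw [if_neg hi]; simpa using abs_nonneg (x p)
  · have hb : BddAbove (Set.range fun i => |tsProj ({p} : Finset ℕ+) x i|) := by
      refine ⟨|x p|, ?_⟩
      rintro _ ⟨i, rfl⟩
      show |tsProj ({p} : Finset ℕ+) x i| ≤ |x p|
      rw [tsProj_apply]
      by_cases hi : i ∈ ({p} : Finset ℕ+)
      · rw [if_pos hi, Finset.mem_singleton.mp hi]
      · rw [if_neg hi]; simpa using abs_nonneg (x p)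
    have := le_ciSup hb p
    rw [tsProj_apply, if_pos (Finset.mem_singleton_self p)] at this
    exact this

lemma tnorm_lower_singletons (hθ0 : 0 ≤ θ) (hθ1 : θ ≤ 1) (x : ℕ+ →₀ ℝ) {d : ℕ}
    (k : Fin d → ℕ+) (hmono : StrictMono k) (hd : ∀ l, d ≤ ((k l : ℕ+) : ℕ)) :
    θ * ∑ l, |x (k l)| ≤ tnorm θ (Schreier 1) x := by
  have hadm : TsAdmissible (Schreier 1) (fun l => ({k l} : Finset ℕ+)) := by
    refine ⟨fun l => ⟨k l, Finset.mem_singleton_self _⟩, ?_, k, ?_, ?_⟩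
    · intro i j hij a ha b hb
      rw [Finset.mem_singleton] at ha hb
      rw [ha, hb]
      exact hmono hij
    · intro l
      constructor
      · simp
      · intro b hb
        simp only [Finset.coe_singleton, Set.mem_singleton_iff] at hb
        rw [hb]
    · show ∀ a ∈ Finset.univ.image k, (Finset.univ.image k).card ≤ (a : ℕ)
      intro a ha
      rw [Finset.mem_image] at ha
      obtain ⟨l, _, rfl⟩ := ha
      calc (Finset.univ.image k).card ≤ (Finset.univ : Finset (Fin d)).card :=
            Finset.card_image_le
        _ = d := by simp
        _ ≤ (k l : ℕ) := hd l
  have := tnorm_lower θ (Schreier 1) hθ0 hθ1 x _ hadm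
  simpa [tnormAux0_proj_singleton] using this

end TsAux

namespace TsAux

section Emb
variable {X : Type*} [NormedAddCommGroup X] [NormedSpace ℝ X] (e : ℕ+ → X)

def emb : (ℕ+ →₀ ℝ) →ₗ[ℝ] X :=
  Finsupp.lsum ℝ fun i => LinearMap.toSpanSingleton ℝ X (e i)

lemma emb_apply (b : ℕ+ →₀ ℝ) : emb e b = b.sum fun i c => c • e i := rfl

lemma emb_single (i : ℕ+) (c : ℝ) : emb e (Finsupp.single i c) = c • e i := by
  rw [emb_apply]
  exact Finsupp.sum_single_index (by rw [zero_smul])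

lemma hasSum_emb (b : ℕ+ →₀ ℝ) : HasSum (fun j => b j • e j) (emb e b) := by
  rw [emb_apply]
  have := hasSum_sum_of_ne_finset_zero (f := fun j => b j • e j) (s := b.support) (L := SummationFilter.unconditional ℕ+)
    (fun j hj => by show b j • e j = 0; rw [Finsupp.notMem_support_iff.mp hj, zero_smul])
  simpa [Finsupp.sum] using this

lemma coord_le_norm (θ : ℝ) (hθ0 : 0 ≤ θ) (hθ1 : θ ≤ 1)
    (hn : ∀ b : ℕ+ →₀ ℝ, ‖emb e b‖ = tnorm θ (Schreier 1) b)
    {a : ℕ+ → ℝ} {x : X} (ha : HasSum (fun j => a j • e j) x) (i : ℕ+) :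
    |a i| ≤ ‖x‖ := by
  classical
  have ht : Filter.Tendsto (fun F : Finset ℕ+ => ‖∑ j ∈ F, a j • e j‖)
      Filter.atTop (nhds ‖x‖) := ha.norm
  refine ge_of_tendsto ht ?_
  filter_upwards [Filter.eventually_ge_atTop ({i} : Finset ℕ+)] with F hF
  have hiF : i ∈ F := Finset.singleton_subset_iff.mp hF
  set b : ℕ+ →₀ ℝ := ∑ j ∈ F, Finsupp.single j (a j) with hb
  have hemb : emb e b = ∑ j ∈ F, a j • e j := by
    rw [hb, map_sum]
    exact Finset.sum_congr rfl fun j _ => emb_single e j (a j)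
  have hbi : b i = a i := by
    rw [hb, Finsupp.finset_sum_apply]
    rw [show (∑ j ∈ F, Finsupp.single j (a j) i) = ∑ j ∈ F, if j = i then a j else 0 from
      Finset.sum_congr rfl fun j _ => Finsupp.single_apply]
    rw [Finset.sum_ite_eq' F i a, if_pos hiF]
  calc |a i| = |b i| := by rw [hbi]
    _ ≤ tnorm θ (Schreier 1) b := abs_le_tnorm θ (Schreier 1) hθ0 hθ1 b i
    _ = ‖emb e b‖ := (hn b).symm
    _ = ‖∑ j ∈ F, a j • e j‖ := by rw [hemb]

end Emb

end TsAux

/-- If `u` in the unit sphere of `T[θ, S₁]` satisfies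
`min(‖u + y‖, ‖u − y‖) ≤ 1` for all `y` in the unit sphere, then `u = ± eᵢ` for some
`1 ≤ i ≤ ⌊θ⁻¹⌋`. -/
theorem tsirelson_min_norm_le_one_char
    (θ : ℝ) (hθ0 : 0 < θ) (hθ : θ ≤ 1 / 2)
    (X : Type*) [NormedAddCommGroup X] [NormedSpace ℝ X] (e : ℕ+ → X)
    (hX : IsTsirelsonSpace θ 1 X e)
    (u : X) (hu : ‖u‖ = 1)
    (h : ∀ y : X, ‖y‖ = 1 → min ‖u + y‖ ‖u - y‖ ≤ 1) :
    ∃ (ε : ℝ) (i : ℕ+), (ε = 1 ∨ ε = -1) ∧ (i : ℕ) ≤ ⌊θ⁻¹⌋₊ ∧ u = ε • e i := by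
  classical
  have hθ0' : (0:ℝ) ≤ θ := hθ0.le
  have hθ1 : θ ≤ 1 := by linarith
  have hn : ∀ b : ℕ+ →₀ ℝ, ‖TsAux.emb e b‖ = tnorm θ (Schreier 1) b := by
    intro b; rw [TsAux.emb_apply]; exact hX.norm_embed b
  obtain ⟨a, ha, -⟩ := hX.expansion u
  have coordb : ∀ {aa : ℕ+ → ℝ} {x : X}, HasSum (fun j => aa j • e j) x →
      ∀ i, |aa i| ≤ ‖x‖ :=
    fun haa i => TsAux.coord_le_norm e θ hθ0' hθ1 hn haa i
  -- Step 1: at most one nonzero coordinate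
  have hone : ∀ i j : ℕ+, i ≠ j → a i ≠ 0 → a j = 0 := by
    intro i j hij hai
    by_contra haj
    set si : ℝ := if 0 ≤ a i then 1 else -1 with hsi_def
    set sj : ℝ := if 0 ≤ a j then 1 else -1 with hsj_def
    have hsi : |si| = 1 := by rw [hsi_def]; split_ifs <;> norm_num
    have hsj : |sj| = 1 := by rw [hsj_def]; split_ifs <;> norm_num
    set yf : ℕ+ →₀ ℝ := Finsupp.single i si - Finsupp.single j sj with hyf_def
    have hne : j ≠ i := Ne.symm hij
    have hyi : yf i = si := by simp [hyf_def, Finsupp.single_apply, hne]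
    have hyj : yf j = -sj := by simp [hyf_def, Finsupp.single_apply, hij]
    have habs : ∀ q, |yf q| ≤ 1 := by
      intro q
      rcases eq_or_ne q i with rfl | hqi
      · rw [hyi, hsi]
      · rcases eq_or_ne q j with rfl | hqj
        · rw [hyj, abs_neg, hsj]
        · have h0 : yf q = 0 := by
            simp [hyf_def, Finsupp.single_apply, Ne.symm hqi, Ne.symm hqj]
          rw [h0]; norm_num
    have hsupp : yf.support ⊆ {i, j} := by
      refine Finsupp.support_sub.trans ?_
      intro q hq
      rw [Finset.mem_union] at hq
      rcases hq with hq | hq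
      · exact Finset.mem_insert.mpr (Or.inl (Finset.mem_singleton.mp
          (Finsupp.support_single_subset hq)))
      · exact Finset.mem_insert.mpr (Or.inr (Finsupp.support_single_subset hq))
    have hL1 : TsAux.L1 yf ≤ 2 := by
      have hcard : yf.support.card ≤ 2 := by
        refine le_trans (Finset.card_le_card hsupp) ?_
        exact (Finset.card_insert_le _ _).trans (by simp)
      calc TsAux.L1 yf ≤ ∑ k ∈ yf.support, 1 := Finset.sum_le_sum fun k _ => habs k
        _ = yf.support.card := by simp
        _ ≤ 2 := by exact_mod_cast hcard
    have htn : tnorm θ (Schreier 1) yf = 1 := by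
      apply le_antisymm
      · refine (TsAux.tnorm_le_max θ _ hθ0' hθ1 yf).trans (max_le ?_ ?_)
        · rw [TsAux.tnormAux_zero]; exact ciSup_le habs
        · calc θ * TsAux.L1 yf ≤ θ * 2 := mul_le_mul_of_nonneg_left hL1 hθ0'
            _ ≤ 1 := by linarith
      · have := TsAux.abs_le_tnorm θ (Schreier 1) hθ0' hθ1 yf i
        rw [hyi, hsi] at this; exact this
    set y := TsAux.emb e yf with hy_def
    have hy1 : ‖y‖ = 1 := by rw [hy_def, hn, htn]
    have hsum_add : HasSum (fun q => (a q + yf q) • e q) (u + y) := by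
      have := ha.add (TsAux.hasSum_emb e yf)
      simp only [← add_smul] at this; exact this
    have hsum_sub : HasSum (fun q => (a q - yf q) • e q) (u - y) := by
      have := ha.sub (TsAux.hasSum_emb e yf)
      simp only [← sub_smul] at this; exact this
    have h1 : 1 < ‖u + y‖ := by
      have hb := coordb hsum_add i
      have hgt : 1 < |a i + yf i| := by
        rw [hyi, hsi_def]
        rcases le_or_gt 0 (a i) with hpos | hneg
        · have hpos' : 0 < a i := lt_of_le_of_ne hpos (Ne.symm hai)
          rw [if_pos hpos, abs_of_pos (by linarith)]; linarith
        · rw [if_neg (not_le.mpr hneg), abs_of_neg (by linarith)]; linarith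
      linarith
    have h2 : 1 < ‖u - y‖ := by
      have hb := coordb hsum_sub j
      have hgt : 1 < |a j - yf j| := by
        rw [hyj, sub_neg_eq_add, hsj_def]
        rcases le_or_gt 0 (a j) with hpos | hneg
        · have hpos' : 0 < a j := lt_of_le_of_ne hpos (Ne.symm haj)
          rw [if_pos hpos, abs_of_pos (by linarith)]; linarith
        · rw [if_neg (not_le.mpr hneg), abs_of_neg (by linarith)]; linarith
      linarith
    have hmin := h y hy1
    have hlt := lt_min h1 h2
    linarith
  -- Step 2: exactly one nonzero coordinate
  have hex : ∃ i, a i ≠ 0 := by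
    by_contra hno
    push_neg at hno
    have hz : HasSum (fun j => a j • e j) 0 := by
      have he : (fun j : ℕ+ => a j • e j) = fun _ => 0 :=
        funext fun j => by rw [hno j, zero_smul]
      rw [he]; exact hasSum_zero
    have hu0 : u = 0 := ha.unique hz
    rw [hu0] at hu; simp at hu
  obtain ⟨i, hai⟩ := hex
  have hsingle : HasSum (fun j => a j • e j) (a i • e i) :=
    hasSum_single i fun j hj => by rw [hone i j (Ne.symm hj) hai, zero_smul]
  have hu_eq : u = a i • e i := ha.unique hsingle
  have hei : e i = TsAux.emb e (Finsupp.single i 1) := by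
    rw [TsAux.emb_single, one_smul]
  have htn_ei : tnorm θ (Schreier 1) (Finsupp.single i 1) = 1 := by
    apply le_antisymm
    · refine (TsAux.tnorm_le_max θ _ hθ0' hθ1 _).trans (max_le ?_ ?_)
      · rw [TsAux.tnormAux_zero]
        refine ciSup_le fun q => ?_
        rw [Finsupp.single_apply]
        split_ifs <;> norm_num
      · have hL : TsAux.L1 (Finsupp.single i 1) = 1 := by
          rw [TsAux.L1, Finsupp.support_single_ne_zero i one_ne_zero]
          simp
        rw [hL]; linarith
    · have := TsAux.abs_le_tnorm θ (Schreier 1) hθ0' hθ1 (Finsupp.single i 1) i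
      simpa using this
  have hnei : ‖e i‖ = 1 := by rw [hei, hn, htn_ei]
  have habs1 : |a i| = 1 := by
    rw [hu_eq, norm_smul, hnei, mul_one, Real.norm_eq_abs] at hu
    exact hu
  -- Step 3: i ≤ ⌊θ⁻¹⌋₊
  have hile : (i : ℕ) ≤ ⌊θ⁻¹⌋₊ := by
    by_contra hgt
    push_neg at hgt
    have hinv_lt : θ⁻¹ < ((i:ℕ) : ℝ) := (Nat.floor_lt (by positivity)).mp hgt
    have hθi : 1 < θ * ((i:ℕ) : ℝ) := by
      have := mul_lt_mul_of_pos_left hinv_lt hθ0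
      rwa [mul_inv_cancel₀ (ne_of_gt hθ0)] at this
    have h2le : 2 ≤ ⌊θ⁻¹⌋₊ := by
      refine Nat.le_floor ?_
      have h2 : (1/2 : ℝ)⁻¹ ≤ θ⁻¹ := by
        apply inv_anti₀ hθ0 hθ
      rw [show ((2:ℕ):ℝ) = (1/2 : ℝ)⁻¹ by norm_num]
      exact h2
    have hi3 : 3 ≤ (i:ℕ) := by omega
    set m : ℕ := (i:ℕ) - 1 with hm_def
    have hm1 : m + 1 = (i:ℕ) := by omega
    have hm2 : 2 ≤ m := by omega
    have hmR : (0:ℝ) < (m:ℝ) := by exact_mod_cast Nat.lt_of_lt_of_le Nat.zero_lt_two hm2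
    have hmpos : (0:ℝ) < θ * m := mul_pos hθ0 hmR
    set c : ℝ := min 1 (θ * m)⁻¹ with hc_def
    have hc0 : 0 < c := lt_min one_pos (inv_pos.mpr hmpos)
    have hc1 : c ≤ 1 := min_le_left _ _
    have hmc : θ * (m:ℝ) * c = min (θ * m) 1 := by
      rw [hc_def, mul_min_of_nonneg _ _ (le_of_lt hmpos), mul_one,
        mul_inv_cancel₀ (ne_of_gt hmpos)]
    have ppos : ∀ k : ℕ, 0 < (i:ℕ) + k + 1 := fun k => by omega
    set p : ℕ → ℕ+ := fun k => ⟨(i:ℕ) + k + 1, ppos k⟩ with hp_def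
    set F : Finset ℕ+ := (Finset.range m).image p with hF_def
    set yf : ℕ+ →₀ ℝ := Finsupp.onFinset F (fun q => if q ∈ F then c else 0)
      (fun q hq => by
        by_contra hq'
        exact hq (show (if q ∈ F then c else 0) = 0 from if_neg hq')) with hyf_def
    have hyf_apply : ∀ q, yf q = if q ∈ F then c else 0 := fun q => rfl
    have hpF : ∀ k, k < m → p k ∈ F := fun k hk =>
      Finset.mem_image_of_mem p (Finset.mem_range.mpr hk)
    have hp_ne_i : ∀ k, p k ≠ i := by
      intro k hk
      have h2 : ((p k : ℕ+) : ℕ) = ((i : ℕ+) : ℕ) := congrArg (fun q : ℕ+ => (q:ℕ)) hk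
      have h3 : (i:ℕ) + k + 1 = (i:ℕ) := h2
      omega
    have hiF : i ∉ F := by
      rw [hF_def]
      intro hiF
      rw [Finset.mem_image] at hiF
      obtain ⟨k, _, hk⟩ := hiF
      exact hp_ne_i k hk
    have hyf_p : ∀ k, k < m → yf (p k) = c := fun k hk => by
      rw [hyf_apply, if_pos (hpF k hk)]
    have hyf_i : yf i = 0 := by rw [hyf_apply, if_neg hiF]
    have hyf_abs : ∀ q, |yf q| ≤ c := by
      intro q
      rw [hyf_apply]
      split_ifs
      · rw [abs_of_pos hc0]
      · simpa using le_of_lt hc0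
    have hL1 : TsAux.L1 yf ≤ m * c := by
      rw [TsAux.L1]
      calc ∑ k ∈ yf.support, |yf k|
          ≤ ∑ k ∈ F, |yf k| := Finset.sum_le_sum_of_subset_of_nonneg
            Finsupp.support_onFinset_subset (fun _ _ _ => abs_nonneg _)
        _ ≤ ∑ k ∈ F, c := Finset.sum_le_sum fun k _ => hyf_abs k
        _ = F.card * c := by rw [Finset.sum_const, nsmul_eq_mul]
        _ ≤ m * c := by
            refine mul_le_mul_of_nonneg_right ?_ (le_of_lt hc0)
            have : F.card ≤ m := by
              rw [hF_def]
              exact Finset.card_image_le.trans (by simp)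
            exact_mod_cast this
    have hc_inv_le : θ * m ≤ 1 → c = 1 := by
      intro hcase
      rw [hc_def, min_eq_left]
      rw [show (θ*m)⁻¹ = 1/(θ*m) by rw [one_div], le_div_iff₀ hmpos]
      linarith
    have hc_big : 1 < θ * m → θ * (m:ℝ) * c = 1 := by
      intro hcase
      rw [hmc, min_eq_right (le_of_lt hcase)]
    have htn_yf : tnorm θ (Schreier 1) yf = 1 := by
      apply le_antisymm
      · refine (TsAux.tnorm_le_max θ _ hθ0' hθ1 yf).trans (max_le ?_ ?_)
        · rw [TsAux.tnormAux_zero]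
          exact ciSup_le fun q => (hyf_abs q).trans hc1
        · calc θ * TsAux.L1 yf ≤ θ * (m * c) := mul_le_mul_of_nonneg_left hL1 hθ0'
            _ = θ * m * c := by ring
            _ = min (θ * m) 1 := hmc
            _ ≤ 1 := min_le_right _ _
      · rcases le_or_gt (θ * m) 1 with hcase | hcase
        · have hc_eq := hc_inv_le hcase
          have := TsAux.abs_le_tnorm θ (Schreier 1) hθ0' hθ1 yf (p 0)
          rw [hyf_p 0 (by omega), hc_eq] at this
          simpa using this
        · have hmono : StrictMono (fun l : Fin m => p (l : ℕ)) := by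
            intro l l' hll
            show p (l:ℕ) < p (l':ℕ)
            rw [hp_def]
            have : (i:ℕ) + (l:ℕ) + 1 < (i:ℕ) + (l':ℕ) + 1 := by
              have := Fin.lt_iff_val_lt_val.mp hll; omega
            exact this
          have hd : ∀ l : Fin m, m ≤ ((p (l:ℕ) : ℕ+) : ℕ) := by
            intro l; rw [hp_def]; show m ≤ (i:ℕ) + (l:ℕ) + 1; omega
          have hlow := TsAux.tnorm_lower_singletons θ hθ0' hθ1 yf
            (fun l : Fin m => p (l:ℕ)) hmono hd
          have hsum : ∑ l : Fin m, |yf (p (l:ℕ))| = m * c := by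
            rw [Finset.sum_congr rfl (fun l _ => by
              rw [hyf_p (l:ℕ) l.isLt, abs_of_pos hc0])]
            rw [Finset.sum_const, Finset.card_univ, Fintype.card_fin, nsmul_eq_mul]
          rw [hsum] at hlow
          have heq : θ * ((m:ℝ) * c) = 1 := by rw [← mul_assoc]; exact hc_big hcase
          linarith
    set y := TsAux.emb e yf with hy_def
    have hy1 : ‖y‖ = 1 := by rw [hy_def, hn, htn_yf]
    have hu_emb : u = TsAux.emb e (Finsupp.single i (a i)) := by
      rw [hu_eq, TsAux.emb_single]
    have hadd : u + y = TsAux.emb e (Finsupp.single i (a i) + yf) := by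
      rw [hu_emb, hy_def, map_add]
    have hsub : u - y = TsAux.emb e (Finsupp.single i (a i) - yf) := by
      rw [hu_emb, hy_def, map_sub]
    -- the admissible family {i} < {p 0} < ... < {p (m-1)}
    set kk : Fin (m+1) → ℕ+ := fun l => ⟨(i:ℕ) + (l:ℕ), by omega⟩ with hkk_def
    have hk_mono : StrictMono kk := by
      intro l l' hll
      have hnat : (i:ℕ) + (l:ℕ) < (i:ℕ) + (l':ℕ) := by
        have := Fin.lt_iff_val_lt_val.mp hll; omega
      exact hnat
    have key : ∀ zf : ℕ+ →₀ ℝ, |zf i| = 1 → (∀ k, k < m → |zf (p k)| = c) →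
        1 < tnorm θ (Schreier 1) zf := by
      intro zf hzi hzp
      have hd : ∀ l : Fin (m+1), (m+1) ≤ ((kk l) : ℕ) := by
        intro l; show m + 1 ≤ (i:ℕ) + (l:ℕ); omega
      have hlow := TsAux.tnorm_lower_singletons θ hθ0' hθ1 zf kk hk_mono hd
      have hsum : ∑ l : Fin (m+1), |zf (kk l)| = 1 + m * c := by
        rw [Fin.sum_univ_succ]
        have h0 : kk 0 = i := by
          apply Subtype.ext
          show (i:ℕ) + ((0 : Fin (m+1)):ℕ) = (i:ℕ)
          simp
        have hsucc : ∀ l : Fin m, kk l.succ = p (l:ℕ) := by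
          intro l; apply Subtype.ext
          show (i:ℕ) + ((l.succ : Fin (m+1)):ℕ) = (i:ℕ) + (l:ℕ) + 1
          simp [Fin.val_succ]
          omega
        rw [h0, hzi]
        congr 1
        calc ∑ l : Fin m, |zf (kk l.succ)|
            = ∑ l : Fin m, c := by
              refine Finset.sum_congr rfl fun l _ => ?_
              rw [hsucc l, hzp (l:ℕ) l.isLt]
          _ = m * c := by
              rw [Finset.sum_const, Finset.card_univ, Fintype.card_fin, nsmul_eq_mul]
      rw [hsum] at hlow
      have hgt1 : 1 < θ * (1 + (m:ℝ) * c) := by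
        rcases le_or_gt (θ * m) 1 with hcase | hcase
        · have hc_eq := hc_inv_le hcase
          rw [hc_eq, mul_one]
          have hmi : (1 : ℝ) + (m:ℝ) = ((i:ℕ) : ℝ) := by
            rw [← hm1]; push_cast; ring
          rw [hmi]
          exact hθi
        · have hexp : θ * (1 + (m:ℝ) * c) = θ + θ * m * c := by ring
          rw [hexp, hc_big hcase]
          linarith
      linarith
    have hco_add_i : |(Finsupp.single i (a i) + yf) i| = 1 := by
      rw [Finsupp.add_apply, Finsupp.single_eq_same, hyf_i, add_zero]
      exact habs1
    have hco_sub_i : |(Finsupp.single i (a i) - yf) i| = 1 := by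
      rw [Finsupp.sub_apply, Finsupp.single_eq_same, hyf_i, sub_zero]
      exact habs1
    have hco_add_p : ∀ k, k < m → |(Finsupp.single i (a i) + yf) (p k)| = c := by
      intro k hk
      rw [Finsupp.add_apply, Finsupp.single_apply,
        if_neg (fun hh : i = p k => hp_ne_i k hh.symm), hyf_p k hk, zero_add,
        abs_of_pos hc0]
    have hco_sub_p : ∀ k, k < m → |(Finsupp.single i (a i) - yf) (p k)| = c := by
      intro k hk
      rw [Finsupp.sub_apply, Finsupp.single_apply,
        if_neg (fun hh : i = p k => hp_ne_i k hh.symm), hyf_p k hk, zero_sub,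
        abs_neg, abs_of_pos hc0]
    have h1 : 1 < ‖u + y‖ := by rw [hadd, hn]; exact key _ hco_add_i hco_add_p
    have h2 : 1 < ‖u - y‖ := by rw [hsub, hn]; exact key _ hco_sub_i hco_sub_p
    have hmin := h y hy1
    have hlt := lt_min h1 h2
    linarith
  exact ⟨a i, i, (abs_eq (by norm_num)).mp habs1, hile, by rw [hu_eq]⟩
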